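/- Let G and H be finite connected simple graphs with G having at least 5 vertices, and let ψ be an isomorphism from the line graph L(G) to the line graph L(H). Then there exists exactly one graph isomorphism φ from G to H that induces ψ, i.e., such that for every edge {u,v} of G, ψ({u,v}) = {φ(u), φ(v)}. -/

import Mathlib

namespace WhitneyAux
open SimpleGraph
variable {V W : Type*} {G : SimpleGraph V} {H : SimpleGraph W}

lemma shared_unique {E F : Sym2 V} (hEF : E ≠ F) {x y : V}
    (hxE : x ∈ E) (hxF : x ∈ F) (hyE : y ∈ E) (hyF : y ∈ F) : x = y := by
  by_contra hxy
  exact hEF (Sym2.eq_of_ne_mem hxy hxE hyE hxF hyF)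

lemma trichotomy {E1 E2 E3 : Sym2 V}
    (s12 : ∃ v, v ∈ E1 ∧ v ∈ E2) (s13 : ∃ v, v ∈ E1 ∧ v ∈ E3)
    (s23 : ∃ v, v ∈ E2 ∧ v ∈ E3) :
    (∃ v, v ∈ E1 ∧ v ∈ E2 ∧ v ∈ E3) ∨
      ∃ p q r : V, p ≠ q ∧ p ≠ r ∧ q ≠ r ∧ E1 = s(p, q) ∧ E2 = s(p, r) ∧ E3 = s(q, r) := by
  obtain ⟨p, hp1, hp2⟩ := s12
  obtain ⟨q, hq1, hq3⟩ := s13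
  obtain ⟨r, hr2, hr3⟩ := s23
  by_cases hpq : p = q
  · exact Or.inl ⟨p, hp1, hp2, hpq ▸ hq3⟩
  by_cases hpr : p = r
  · exact Or.inl ⟨p, hp1, hp2, hpr ▸ hr3⟩
  by_cases hqr : q = r
  · exact Or.inl ⟨q, hq1, hqr ▸ hr2, hq3⟩
  · exact Or.inr ⟨p, q, r, hpq, hpr, hqr, (Sym2.mem_and_mem_iff hpq).1 ⟨hp1, hq1⟩,
      (Sym2.mem_and_mem_iff hpr).1 ⟨hp2, hr2⟩, (Sym2.mem_and_mem_iff hqr).1 ⟨hq3, hr3⟩⟩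

lemma shares_map (ψ : G.lineGraph ≃g H.lineGraph) {a b : G.edgeSet} (hab : a ≠ b) :
    (∃ v, v ∈ (a : Sym2 V) ∧ v ∈ (b : Sym2 V)) ↔
      ∃ w, w ∈ ((ψ a : H.edgeSet) : Sym2 W) ∧ w ∈ ((ψ b : H.edgeSet) : Sym2 W) := by
  constructor
  · intro ⟨v, hv⟩
    exact (lineGraph_adj_iff_exists.1 (ψ.map_rel_iff.2 (lineGraph_adj_iff_exists.2 ⟨hab, v, hv⟩))).2
  · intro ⟨w, hw⟩
    have hab' : (ψ a : H.edgeSet) ≠ ψ b := fun h => hab (ψ.injective h)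
    exact (lineGraph_adj_iff_exists.1 (ψ.map_rel_iff.1 (lineGraph_adj_iff_exists.2 ⟨hab', w, hw⟩))).2

lemma card_le_of_closed [Fintype V] (hG : G.Connected)
    (S : Finset V) (hne : S.Nonempty)
    (hclosed : ∀ s ∈ S, ∀ t, G.Adj s t → t ∈ S) :
    Fintype.card V ≤ S.card := by
  obtain ⟨u, hu⟩ := hne
  have key : ∀ (x y : V), G.Walk x y → x ∈ S → y ∈ S := by
    intro x y w
    induction w with
    | nil => exact id
    | cons h p ih => intro hx; exact ih (hclosed _ hx _ h)
  have huniv : (Finset.univ : Finset V) ⊆ S := fun v _ =>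
    key u v (hG.preconnected u v).some hu
  calc Fintype.card V = (Finset.univ : Finset V).card := Finset.card_univ.symm
    _ ≤ S.card := Finset.card_le_card huniv

lemma exists_edge [Fintype V] (hG : G.Connected) (h2 : 2 ≤ Fintype.card V) (u : V) :
    ∃ e : G.edgeSet, u ∈ (e : Sym2 V) := by
  obtain ⟨v, hv⟩ := Fintype.exists_ne_of_one_lt_card (by omega) u
  obtain ⟨w⟩ := hG.preconnected u v
  cases w with
  | nil => exact absurd rfl hv.symm
  | cons h p => exact ⟨⟨s(u, _), G.mem_edgeSet.2 h⟩, Sym2.mem_mk_left _ _⟩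

/-- representation of an edge through a vertex -/
lemma edge_rep (e : G.edgeSet) {u : V} (hu : u ∈ (e : Sym2 V)) :
    ∃ v, (e : Sym2 V) = s(u, v) ∧ G.Adj u v := by
  refine ⟨Sym2.Mem.other hu, (Sym2.other_spec hu).symm, ?_⟩
  have he := e.2
  rw [← Sym2.other_spec hu] at he
  exact G.mem_edgeSet.1 he

lemma star_to_star [Fintype V] (hG : G.Connected) (hcard : 5 ≤ Fintype.card V)
    (ψ : G.lineGraph ≃g H.lineGraph)
    {e f g : G.edgeSet} (hef : e ≠ f) (heg : e ≠ g) (hfg : f ≠ g)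
    {u : V} (hue : u ∈ (e : Sym2 V)) (huf : u ∈ (f : Sym2 V)) (hug : u ∈ (g : Sym2 V)) :
    ∃ x : W, x ∈ ((ψ e : H.edgeSet) : Sym2 W) ∧ x ∈ ((ψ f : H.edgeSet) : Sym2 W) ∧
      x ∈ ((ψ g : H.edgeSet) : Sym2 W) := by
  classical
  have s12 := (shares_map ψ hef).1 ⟨u, hue, huf⟩
  have s13 := (shares_map ψ heg).1 ⟨u, hue, hug⟩
  have s23 := (shares_map ψ hfg).1 ⟨u, huf, hug⟩
  rcases trichotomy s12 s13 s23 with h | ⟨p, q, r, hpq, hpr, hqr, hE1, hE2, hE3⟩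
  · exact h
  exfalso
  set a := Sym2.Mem.other hue with ha_def
  set b := Sym2.Mem.other huf with hb_def
  set c := Sym2.Mem.other hug with hc_def
  have he_eq : (e : Sym2 V) = s(u, a) := (Sym2.other_spec hue).symm
  have hf_eq : (f : Sym2 V) = s(u, b) := (Sym2.other_spec huf).symm
  have hg_eq : (g : Sym2 V) = s(u, c) := (Sym2.other_spec hug).symm
  have hau : a ≠ u := Sym2.other_ne (G.not_isDiag_of_mem_edgeSet e.2) hue
  have hbu : b ≠ u := Sym2.other_ne (G.not_isDiag_of_mem_edgeSet f.2) huf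
  have hcu : c ≠ u := Sym2.other_ne (G.not_isDiag_of_mem_edgeSet g.2) hug
  have hab : a ≠ b := fun h => hef (Subtype.ext (he_eq.trans (by rw [h, ← hf_eq])))
  have hac : a ≠ c := fun h => heg (Subtype.ext (he_eq.trans (by rw [h, ← hg_eq])))
  have hbc : b ≠ c := fun h => hfg (Subtype.ext (hf_eq.trans (by rw [h, ← hg_eq])))
  have claim1 : ∀ h : G.edgeSet, u ∈ (h : Sym2 V) → h = e ∨ h = f ∨ h = g := by
    intro h hu'
    by_contra hcon
    push_neg at hcon
    obtain ⟨hne, hnf, hng⟩ := hcon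
    obtain ⟨w1, hw1h, hw1e⟩ := (shares_map ψ hne).1 ⟨u, hu', hue⟩
    obtain ⟨w2, hw2h, hw2f⟩ := (shares_map ψ hnf).1 ⟨u, hu', huf⟩
    obtain ⟨w3, hw3h, hw3g⟩ := (shares_map ψ hng).1 ⟨u, hu', hug⟩
    rw [hE1, Sym2.mem_iff] at hw1e
    rw [hE2, Sym2.mem_iff] at hw2f
    rw [hE3, Sym2.mem_iff] at hw3g
    by_cases hp : p ∈ ((ψ h : H.edgeSet) : Sym2 W)
    · rcases hw3g with rfl | rfl
      · exact hne (ψ.injective (Subtype.ext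
          (((Sym2.mem_and_mem_iff hpq).1 ⟨hp, hw3h⟩).trans hE1.symm)))
      · exact hnf (ψ.injective (Subtype.ext
          (((Sym2.mem_and_mem_iff hpr).1 ⟨hp, hw3h⟩).trans hE2.symm)))
    · have hq : q ∈ ((ψ h : H.edgeSet) : Sym2 W) := by
        rcases hw1e with rfl | rfl
        · exact absurd hw1h hp
        · exact hw1h
      have hr : r ∈ ((ψ h : H.edgeSet) : Sym2 W) := by
        rcases hw2f with rfl | rfl
        · exact absurd hw2h hp
        · exact hw2h
      exact hng (ψ.injective (Subtype.ext
        (((Sym2.mem_and_mem_iff hqr).1 ⟨hq, hr⟩).trans hE3.symm)))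
  have hmeet_e : ∀ h : G.edgeSet, h ≠ e → h ≠ f → h ≠ g →
      (∃ v, v ∈ (h : Sym2 V) ∧ v ∈ (e : Sym2 V)) →
      (∃ v, v ∈ (h : Sym2 V) ∧ v ∈ (f : Sym2 V)) ∨
        ∃ v, v ∈ (h : Sym2 V) ∧ v ∈ (g : Sym2 V) := by
    intro h hne hnf hng hsh
    obtain ⟨w, hwh, hwe⟩ := (shares_map ψ hne).1 hsh
    rw [hE1, Sym2.mem_iff] at hwe
    rcases hwe with rfl | rfl
    · exact Or.inl ((shares_map ψ hnf).2 ⟨w, hwh, by rw [hE2]; exact Sym2.mem_mk_left _ _⟩)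
    · exact Or.inr ((shares_map ψ hng).2 ⟨w, hwh, by rw [hE3]; exact Sym2.mem_mk_left _ _⟩)
  have hmeet_f : ∀ h : G.edgeSet, h ≠ e → h ≠ f → h ≠ g →
      (∃ v, v ∈ (h : Sym2 V) ∧ v ∈ (f : Sym2 V)) →
      (∃ v, v ∈ (h : Sym2 V) ∧ v ∈ (e : Sym2 V)) ∨
        ∃ v, v ∈ (h : Sym2 V) ∧ v ∈ (g : Sym2 V) := by
    intro h hne hnf hng hsh
    obtain ⟨w, hwh, hwf⟩ := (shares_map ψ hnf).1 hsh
    rw [hE2, Sym2.mem_iff] at hwf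
    rcases hwf with rfl | rfl
    · exact Or.inl ((shares_map ψ hne).2 ⟨w, hwh, by rw [hE1]; exact Sym2.mem_mk_left _ _⟩)
    · exact Or.inr ((shares_map ψ hng).2 ⟨w, hwh, by rw [hE3]; exact Sym2.mem_mk_right _ _⟩)
  have hmeet_g : ∀ h : G.edgeSet, h ≠ e → h ≠ f → h ≠ g →
      (∃ v, v ∈ (h : Sym2 V) ∧ v ∈ (g : Sym2 V)) →
      (∃ v, v ∈ (h : Sym2 V) ∧ v ∈ (e : Sym2 V)) ∨
        ∃ v, v ∈ (h : Sym2 V) ∧ v ∈ (f : Sym2 V) := by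
    intro h hne hnf hng hsh
    obtain ⟨w, hwh, hwg⟩ := (shares_map ψ hng).1 hsh
    rw [hE3, Sym2.mem_iff] at hwg
    rcases hwg with rfl | rfl
    · exact Or.inl ((shares_map ψ hne).2 ⟨w, hwh, by rw [hE1]; exact Sym2.mem_mk_right _ _⟩)
    · exact Or.inr ((shares_map ψ hnf).2 ⟨w, hwh, by rw [hE2]; exact Sym2.mem_mk_right _ _⟩)
  have key : ∀ (x : V) (e' f' g' : G.edgeSet) (y z : V), x ≠ u → y ≠ u → z ≠ u →
      x ≠ y → x ≠ z →
      (e' : Sym2 V) = s(u, x) → (f' : Sym2 V) = s(u, y) → (g' : Sym2 V) = s(u, z) →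
      (∀ h : G.edgeSet, h ≠ e' → h ≠ f' → h ≠ g' →
        (∃ v, v ∈ (h : Sym2 V) ∧ v ∈ (e' : Sym2 V)) →
        (∃ v, v ∈ (h : Sym2 V) ∧ v ∈ (f' : Sym2 V)) ∨
          ∃ v, v ∈ (h : Sym2 V) ∧ v ∈ (g' : Sym2 V)) →
      ∀ t, G.Adj x t → t = u ∨ t = y ∨ t = z := by
    intro x e' f' g' y z hxu hyu hzu hxy hxz he' hf' hg' hmeet t hadj
    by_cases htu : t = u
    · exact Or.inl htu
    have h : G.edgeSet := ⟨s(x, t), G.mem_edgeSet.2 hadj⟩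
    have hhv : ((⟨s(x, t), G.mem_edgeSet.2 hadj⟩ : G.edgeSet) : Sym2 V) = s(x, t) := rfl
    have hne : (⟨s(x, t), G.mem_edgeSet.2 hadj⟩ : G.edgeSet) ≠ e' := by
      intro hcon
      have h5 : s(x, t) = s(u, x) := by rw [← hhv, hcon, he']
      rw [Sym2.eq_iff] at h5
      rcases h5 with ⟨h1, _⟩ | ⟨_, h2⟩
      · exact hxu h1
      · exact htu h2
    have hnf : (⟨s(x, t), G.mem_edgeSet.2 hadj⟩ : G.edgeSet) ≠ f' := by
      intro hcon
      have h5 : s(x, t) = s(u, y) := by rw [← hhv, hcon, hf']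
      rw [Sym2.eq_iff] at h5
      rcases h5 with ⟨h1, _⟩ | ⟨h1, _⟩
      · exact hxu h1
      · exact hxy h1
    have hng : (⟨s(x, t), G.mem_edgeSet.2 hadj⟩ : G.edgeSet) ≠ g' := by
      intro hcon
      have h5 : s(x, t) = s(u, z) := by rw [← hhv, hcon, hg']
      rw [Sym2.eq_iff] at h5
      rcases h5 with ⟨h1, _⟩ | ⟨h1, _⟩
      · exact hxu h1
      · exact hxz h1
    have hsh : ∃ v, v ∈ ((⟨s(x, t), G.mem_edgeSet.2 hadj⟩ : G.edgeSet) : Sym2 V) ∧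
        v ∈ (e' : Sym2 V) :=
      ⟨x, Sym2.mem_mk_left _ _, by rw [he']; exact Sym2.mem_mk_right _ _⟩
    rcases hmeet _ hne hnf hng hsh with ⟨v, hvh, hvf⟩ | ⟨v, hvh, hvg⟩
    · rw [hhv, Sym2.mem_iff] at hvh
      rw [hf', Sym2.mem_iff] at hvf
      rcases hvh with rfl | rfl
      · rcases hvf with h1 | h1
        · exact absurd h1 hxu
        · exact absurd h1 hxy
      · tauto
    · rw [hhv, Sym2.mem_iff] at hvh
      rw [hg', Sym2.mem_iff] at hvg
      rcases hvh with rfl | rfl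
      · rcases hvg with h1 | h1
        · exact absurd h1 hxu
        · exact absurd h1 hxz
      · tauto
  have hclosed : ∀ s ∈ ({u, a, b, c} : Finset V), ∀ t, G.Adj s t →
      t ∈ ({u, a, b, c} : Finset V) := by
    intro s hs t hadj
    simp only [Finset.mem_insert, Finset.mem_singleton] at hs ⊢
    rcases hs with rfl | rfl | rfl | rfl
    · have hu' : s ∈ s(s, t) := Sym2.mem_mk_left _ _
      rcases claim1 ⟨s(s, t), G.mem_edgeSet.2 hadj⟩ hu' with h1 | h1 | h1
      · have h2 : s(s, t) = s(s, a) := by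
          have := congrArg Subtype.val h1; rw [he_eq] at this; exact this
        exact Or.inr (Or.inl (Sym2.congr_right.1 h2))
      · have h2 : s(s, t) = s(s, b) := by
          have := congrArg Subtype.val h1; rw [hf_eq] at this; exact this
        exact Or.inr (Or.inr (Or.inl (Sym2.congr_right.1 h2)))
      · have h2 : s(s, t) = s(s, c) := by
          have := congrArg Subtype.val h1; rw [hg_eq] at this; exact this
        exact Or.inr (Or.inr (Or.inr (Sym2.congr_right.1 h2)))
    · rcases key a e f g b c hau hbu hcu hab hac he_eq hf_eq hg_eq hmeet_e t hadj with
        h1 | h1 | h1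
      · exact Or.inl h1
      · exact Or.inr (Or.inr (Or.inl h1))
      · exact Or.inr (Or.inr (Or.inr h1))
    · rcases key b f e g a c hbu hau hcu (Ne.symm hab) hbc hf_eq he_eq hg_eq
        (fun h h1 h2 h3 => hmeet_f h h2 h1 h3) t hadj with h1 | h1 | h1
      · exact Or.inl h1
      · exact Or.inr (Or.inl h1)
      · exact Or.inr (Or.inr (Or.inr h1))
    · rcases key c g e f a b hcu hau hbu (Ne.symm hac) (Ne.symm hbc) hg_eq he_eq hf_eq
        (fun h h1 h2 h3 => hmeet_g h h2 h3 h1) t hadj with h1 | h1 | h1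
      · exact Or.inl h1
      · exact Or.inr (Or.inl h1)
      · exact Or.inr (Or.inr (Or.inl h1))
  have hle := card_le_of_closed hG ({u, a, b, c} : Finset V)
    ⟨u, Finset.mem_insert_self _ _⟩ hclosed
  have hS4 : ({u, a, b, c} : Finset V).card ≤ 4 := by
    have h1 := Finset.card_insert_le u ({a, b, c} : Finset V)
    have h2 := Finset.card_insert_le a ({b, c} : Finset V)
    have h3 := Finset.card_insert_le b ({c} : Finset V)
    have h4 : ({c} : Finset V).card = 1 := Finset.card_singleton c
    omega
  omega

end WhitneyAux

set_option maxHeartbeats 2000000 in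
open WhitneyAux SimpleGraph in
theorem whitney_isomorphism_unique {V W : Type*} [Fintype V] [Fintype W]
    (G : SimpleGraph V) (H : SimpleGraph W) (hG : G.Connected) (hH : H.Connected)
    (hcard : 5 ≤ Fintype.card V)
    (ψ : G.lineGraph ≃g H.lineGraph) :
    ∃! φ : G ≃g H, ∀ u v, ∀ h : G.Adj u v,
      ((ψ ⟨s(u, v), G.mem_edgeSet.mpr h⟩ : H.edgeSet) : Sym2 W) = s(φ u, φ v) := by
  classical
  have h2 : 2 ≤ Fintype.card V := by omega
  have hEdge : ∀ u : V, ∃ e : G.edgeSet, u ∈ (e : Sym2 V) := exists_edge hG h2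
  have hψne : ∀ {a b : G.edgeSet}, a ≠ b →
      ((ψ a : H.edgeSet) : Sym2 W) ≠ ((ψ b : H.edgeSet) : Sym2 W) :=
    fun hab h => hab (ψ.injective (Subtype.ext h))
  -- the center of the image star of a vertex of degree ≥ 2
  have hcenter_ex : ∀ u : V,
      (∃ e f : G.edgeSet, e ≠ f ∧ u ∈ (e : Sym2 V) ∧ u ∈ (f : Sym2 V)) →
      ∃ x : W, ∀ e : G.edgeSet, u ∈ (e : Sym2 V) → x ∈ ((ψ e : H.edgeSet) : Sym2 W) := by
    rintro u ⟨e, f, hef, hue, huf⟩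
    obtain ⟨x, hxe, hxf⟩ := (shares_map ψ hef).1 ⟨u, hue, huf⟩
    refine ⟨x, fun g hug => ?_⟩
    by_cases hge : g = e
    · exact hge ▸ hxe
    by_cases hgf : g = f
    · exact hgf ▸ hxf
    obtain ⟨y, hye, hyf, hyg⟩ := star_to_star hG hcard ψ hef
      (fun h => hge h.symm) (fun h => hgf h.symm) hue huf hug
    have hyx : y = x := shared_unique (hψne hef) hye hyf hxe hxf
    exact hyx ▸ hyg
  choose center hcenter using hcenter_ex
  -- centers of adjacent degree-≥2 vertices are distinct
  have hF2 : ∀ (u v : V) (hu : ∃ e f : G.edgeSet, e ≠ f ∧ u ∈ (e : Sym2 V) ∧ u ∈ (f : Sym2 V))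
      (hv : ∃ e f : G.edgeSet, e ≠ f ∧ v ∈ (e : Sym2 V) ∧ v ∈ (f : Sym2 V)),
      G.Adj u v → center u hu ≠ center v hv := by
    intro u v hu hv hadj heq
    have he_mem : s(u, v) ∈ G.edgeSet := G.mem_edgeSet.2 hadj
    have hue : u ∈ ((⟨s(u, v), he_mem⟩ : G.edgeSet) : Sym2 V) := Sym2.mem_mk_left _ _
    have hve : v ∈ ((⟨s(u, v), he_mem⟩ : G.edgeSet) : Sym2 V) := Sym2.mem_mk_right _ _
    -- pick f ∋ u, f ≠ e and g ∋ v, g ≠ e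
    have hfex : ∃ f : G.edgeSet, f ≠ ⟨s(u, v), he_mem⟩ ∧ u ∈ (f : Sym2 V) := by
      obtain ⟨e1, e2, h12, h1, h2⟩ := hu
      by_cases he1 : e1 = ⟨s(u, v), he_mem⟩
      · exact ⟨e2, by rw [← he1]; exact fun h => h12 h.symm, h2⟩
      · exact ⟨e1, he1, h1⟩
    have hgex : ∃ g : G.edgeSet, g ≠ ⟨s(u, v), he_mem⟩ ∧ v ∈ (g : Sym2 V) := by
      obtain ⟨e1, e2, h12, h1, h2⟩ := hv
      by_cases he1 : e1 = ⟨s(u, v), he_mem⟩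
      · exact ⟨e2, by rw [← he1]; exact fun h => h12 h.symm, h2⟩
      · exact ⟨e1, he1, h1⟩
    obtain ⟨f, hfe, huf⟩ := hfex
    obtain ⟨g, hge, hvg⟩ := hgex
    have hxe : center u hu ∈ ((ψ ⟨s(u, v), he_mem⟩ : H.edgeSet) : Sym2 W) :=
      hcenter u hu _ hue
    have hxf : center u hu ∈ ((ψ f : H.edgeSet) : Sym2 W) := hcenter u hu f huf
    have hxg : center u hu ∈ ((ψ g : H.edgeSet) : Sym2 W) := by
      rw [heq]; exact hcenter v hv g hvg
    have hfg : f ≠ g := by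
      intro h
      subst h
      exact hfe (Subtype.ext ((Sym2.mem_and_mem_iff hadj.ne).1 ⟨huf, hvg⟩))
    obtain ⟨w, hwf, hwg⟩ := (shares_map ψ hfg).2 ⟨center u hu, hxf, hxg⟩
    have hwu : w ≠ u := fun h =>
      hge (Subtype.ext ((Sym2.mem_and_mem_iff hadj.ne).1 ⟨h ▸ hwg, hvg⟩))
    have hwv : w ≠ v := fun h =>
      hfe (Subtype.ext ((Sym2.mem_and_mem_iff hadj.ne).1 ⟨huf, h ▸ hwf⟩))
    have hfw : (f : Sym2 V) = s(u, w) := (Sym2.mem_and_mem_iff (Ne.symm hwu)).1 ⟨huf, hwf⟩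
    have hgw : (g : Sym2 V) = s(v, w) := (Sym2.mem_and_mem_iff (Ne.symm hwv)).1 ⟨hvg, hwg⟩
    -- find an edge leaving {u, v, w}
    have hnotcl : ¬ (∀ s ∈ ({u, v, w} : Finset V), ∀ t, G.Adj s t →
        t ∈ ({u, v, w} : Finset V)) := by
      intro hcl
      have hle := card_le_of_closed hG _ ⟨u, Finset.mem_insert_self _ _⟩ hcl
      have hc3 : ({u, v, w} : Finset V).card ≤ 3 := by
        have h1 := Finset.card_insert_le u ({v, w} : Finset V)
        have h2 := Finset.card_insert_le v ({w} : Finset V)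
        have h3 : ({w} : Finset V).card = 1 := Finset.card_singleton w
        omega
      omega
    push_neg at hnotcl
    obtain ⟨s, hsS, t, hadjst, htS⟩ := hnotcl
    simp only [Finset.mem_insert, Finset.mem_singleton] at hsS htS
    push_neg at htS
    obtain ⟨htu, htv, htw⟩ := htS
    have ht_mem : s(s, t) ∈ G.edgeSet := G.mem_edgeSet.2 hadjst
    -- in each case, the image of the new edge contains the center, contradiction
    rcases hsS with rfl | rfl | rfl
    · -- s = u
      have hhe : (⟨s(s, t), ht_mem⟩ : G.edgeSet) ≠ ⟨s(s, v), he_mem⟩ := by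
        intro hc
        have := congrArg Subtype.val hc
        exact htv (Sym2.congr_right.1 this)
      have hhf : (⟨s(s, t), ht_mem⟩ : G.edgeSet) ≠ f := by
        intro hc
        have hc2 : s(s, t) = s(s, w) := by
          have h6 := congrArg Subtype.val hc; rw [hfw] at h6; exact h6
        exact htw (Sym2.congr_right.1 hc2)
      obtain ⟨y, hyh, hye, hyf⟩ := star_to_star hG hcard ψ hhe hhf
        (fun h => hfe h.symm) (Sym2.mem_mk_left _ _) hue huf
      have hyx : y = center s hu := shared_unique (hψne (fun h => hfe h.symm)) hye hyf hxe hxf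
      have hxh : center s hu ∈ ((ψ ⟨s(s, t), ht_mem⟩ : H.edgeSet) : Sym2 W) := hyx ▸ hyh
      have hhg : (⟨s(s, t), ht_mem⟩ : G.edgeSet) ≠ g := by
        intro hc
        have hc2 : s(s, t) = s(v, w) := by
          have h6 := congrArg Subtype.val hc; rw [hgw] at h6; exact h6
        rw [Sym2.eq_iff] at hc2
        rcases hc2 with ⟨h1, _⟩ | ⟨h1, _⟩
        · exact hadj.ne h1
        · exact hwu h1.symm
      obtain ⟨z, hz1, hz2⟩ := (shares_map ψ hhg).2 ⟨center s hu, hxh, hxg⟩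
      rw [Sym2.mem_iff] at hz1
      rw [hgw, Sym2.mem_iff] at hz2
      rcases hz1 with rfl | rfl
      · rcases hz2 with h1 | h1
        · exact hadj.ne h1
        · exact hwu h1.symm
      · rcases hz2 with h1 | h1
        · exact htv h1
        · exact htw h1
    · -- s = v
      have hhe : (⟨s(s, t), ht_mem⟩ : G.edgeSet) ≠ ⟨s(u, s), he_mem⟩ := by
        intro hc
        have hc2 : s(s, t) = s(u, s) := congrArg Subtype.val hc
        rw [Sym2.eq_iff] at hc2
        rcases hc2 with ⟨h1, _⟩ | ⟨_, h1⟩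
        · exact hadj.ne h1.symm
        · exact htu h1
      have hhg : (⟨s(s, t), ht_mem⟩ : G.edgeSet) ≠ g := by
        intro hc
        have hc2 : s(s, t) = s(s, w) := by
          have h6 := congrArg Subtype.val hc; rw [hgw] at h6; exact h6
        exact htw (Sym2.congr_right.1 hc2)
      obtain ⟨y, hyh, hye, hyg⟩ := star_to_star hG hcard ψ hhe hhg
        (fun h => hge h.symm) (Sym2.mem_mk_left _ _) hve hvg
      have hyx : y = center u hu := shared_unique (hψne (fun h => hge h.symm)) hye hyg hxe hxg
      have hxh : center u hu ∈ ((ψ ⟨s(s, t), ht_mem⟩ : H.edgeSet) : Sym2 W) := hyx ▸ hyh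
      have hhf : (⟨s(s, t), ht_mem⟩ : G.edgeSet) ≠ f := by
        intro hc
        have hc2 : s(s, t) = s(u, w) := by
          have h6 := congrArg Subtype.val hc; rw [hfw] at h6; exact h6
        rw [Sym2.eq_iff] at hc2
        rcases hc2 with ⟨h1, _⟩ | ⟨h1, _⟩
        · exact hadj.ne h1.symm
        · exact hwv h1.symm
      obtain ⟨z, hz1, hz2⟩ := (shares_map ψ hhf).2 ⟨center u hu, hxh, hxf⟩
      rw [Sym2.mem_iff] at hz1
      rw [hfw, Sym2.mem_iff] at hz2
      rcases hz1 with rfl | rfl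
      · rcases hz2 with h1 | h1
        · exact hadj.ne h1.symm
        · exact hwv h1.symm
      · rcases hz2 with h1 | h1
        · exact htu h1
        · exact htw h1
    · -- s = w
      have hhf : (⟨s(s, t), ht_mem⟩ : G.edgeSet) ≠ f := by
        intro hc
        have hc2 : s(s, t) = s(u, s) := by
          have h6 := congrArg Subtype.val hc; rw [hfw] at h6; exact h6
        rw [Sym2.eq_iff] at hc2
        rcases hc2 with ⟨h1, _⟩ | ⟨_, h1⟩
        · exact hwu h1
        · exact htu h1
      have hhg : (⟨s(s, t), ht_mem⟩ : G.edgeSet) ≠ g := by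
        intro hc
        have hc2 : s(s, t) = s(v, s) := by
          have h6 := congrArg Subtype.val hc; rw [hgw] at h6; exact h6
        rw [Sym2.eq_iff] at hc2
        rcases hc2 with ⟨h1, _⟩ | ⟨_, h1⟩
        · exact hwv h1
        · exact htv h1
      have hwf' : s ∈ (f : Sym2 V) := by rw [hfw]; exact Sym2.mem_mk_right _ _
      have hwg' : s ∈ (g : Sym2 V) := by rw [hgw]; exact Sym2.mem_mk_right _ _
      obtain ⟨y, hyh, hyf, hyg⟩ := star_to_star hG hcard ψ hhf hhg hfg
        (Sym2.mem_mk_left _ _) hwf' hwg'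
      have hyx : y = center u hu := shared_unique (hψne hfg) hyf hyg hxf hxg
      have hxh : center u hu ∈ ((ψ ⟨s(s, t), ht_mem⟩ : H.edgeSet) : Sym2 W) := hyx ▸ hyh
      have hhe : (⟨s(s, t), ht_mem⟩ : G.edgeSet) ≠ ⟨s(u, v), he_mem⟩ := by
        intro hc
        have hc2 : s(s, t) = s(u, v) := congrArg Subtype.val hc
        rw [Sym2.eq_iff] at hc2
        rcases hc2 with ⟨h1, _⟩ | ⟨h1, _⟩
        · exact hwu h1
        · exact hwv h1
      obtain ⟨z, hz1, hz2⟩ := (shares_map ψ hhe).2 ⟨center u hu, hxh, hxe⟩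
      rw [Sym2.mem_iff] at hz1 hz2
      rcases hz1 with rfl | rfl
      · rcases hz2 with h1 | h1
        · exact hwu h1
        · exact hwv h1
      · rcases hz2 with h1 | h1
        · exact htu h1
        · exact htv h1
  -- unique neighbour of a degree-1 vertex
  have huniq_nb : ∀ u : V,
      ¬(∃ e f : G.edgeSet, e ≠ f ∧ u ∈ (e : Sym2 V) ∧ u ∈ (f : Sym2 V)) →
      ∀ {a b : V}, G.Adj u a → G.Adj u b → a = b := by
    intro u hu a b h1 h2
    have heq : (⟨s(u, a), G.mem_edgeSet.2 h1⟩ : G.edgeSet) = ⟨s(u, b), G.mem_edgeSet.2 h2⟩ := by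
      by_contra hne
      exact hu ⟨_, _, hne, Sym2.mem_mk_left _ _, Sym2.mem_mk_left _ _⟩
    exact Sym2.congr_right.1 (congrArg Subtype.val heq)
  -- data for degree-1 vertices
  have hdeg1 : ∀ u : V,
      ¬(∃ e f : G.edgeSet, e ≠ f ∧ u ∈ (e : Sym2 V) ∧ u ∈ (f : Sym2 V)) →
      ∃ (x : W) (v : V), G.Adj u v ∧
        ∃ hv : (∃ e f : G.edgeSet, e ≠ f ∧ v ∈ (e : Sym2 V) ∧ v ∈ (f : Sym2 V)), True ∧
        ∀ (hv' : ∃ e f : G.edgeSet, e ≠ f ∧ v ∈ (e : Sym2 V) ∧ v ∈ (f : Sym2 V))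
          (hadj : G.Adj u v),
          ((ψ ⟨s(u, v), G.mem_edgeSet.2 hadj⟩ : H.edgeSet) : Sym2 W) = s(center v hv', x) ∧
            x ≠ center v hv' := by
    intro u hu
    obtain ⟨e, hue⟩ := hEdge u
    obtain ⟨v, he_eq, hadj⟩ := edge_rep e hue
    have hve : v ∈ (e : Sym2 V) := by rw [he_eq]; exact Sym2.mem_mk_right _ _
    have hv2 : ∃ e f : G.edgeSet, e ≠ f ∧ v ∈ (e : Sym2 V) ∧ v ∈ (f : Sym2 V) := by
      by_contra hv1
      have hcl : ∀ s ∈ ({u, v} : Finset V), ∀ t, G.Adj s t → t ∈ ({u, v} : Finset V) := by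
        intro s hs t hadjst
        simp only [Finset.mem_insert, Finset.mem_singleton] at hs ⊢
        rcases hs with rfl | rfl
        · exact Or.inr (huniq_nb s hu hadjst hadj)
        · exact Or.inl (huniq_nb s hv1 hadjst hadj.symm)
      have hle := card_le_of_closed hG _ ⟨u, Finset.mem_insert_self _ _⟩ hcl
      have hc2 : ({u, v} : Finset V).card ≤ 2 := by
        have h1 := Finset.card_insert_le u ({v} : Finset V)
        have h3 : ({v} : Finset V).card = 1 := Finset.card_singleton v
        omega
      omega
    have hc_mem : center v hv2 ∈ ((ψ e : H.edgeSet) : Sym2 W) := hcenter v hv2 e hve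
    refine ⟨Sym2.Mem.other hc_mem, v, hadj, hv2, trivial, ?_⟩
    intro hv' hadj'
    obtain rfl : hv' = hv2 := Subsingleton.elim hv' hv2
    have hee : (⟨s(u, v), G.mem_edgeSet.2 hadj'⟩ : G.edgeSet) = e := Subtype.ext he_eq.symm
    constructor
    · rw [hee]
      exact (Sym2.other_spec hc_mem).symm
    · exact Sym2.other_ne (H.not_isDiag_of_mem_edgeSet (ψ e).2) hc_mem
  choose xx vv hadj1 hv1 hspec1' using hdeg1
  have hspec1 := fun u hu => (hspec1' u hu).2
  clear hspec1'
  -- the vertex map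
  set φf : V → W := fun u =>
    if h : ∃ e f : G.edgeSet, e ≠ f ∧ u ∈ (e : Sym2 V) ∧ u ∈ (f : Sym2 V) then center u h
    else xx u h with hφf
  have hφf_pos : ∀ u (h : ∃ e f : G.edgeSet, e ≠ f ∧ u ∈ (e : Sym2 V) ∧ u ∈ (f : Sym2 V)),
      φf u = center u h := by
    intro u h
    simp only [hφf]
    rw [dif_pos h]
  have hφf_neg : ∀ u (h : ¬∃ e f : G.edgeSet, e ≠ f ∧ u ∈ (e : Sym2 V) ∧ u ∈ (f : Sym2 V)),
      φf u = xx u h := by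
    intro u h
    simp only [hφf]
    rw [dif_neg h]
  -- the key property
  have hmix : ∀ (u v : V) (h : G.Adj u v)
      (hu : ∃ e f : G.edgeSet, e ≠ f ∧ u ∈ (e : Sym2 V) ∧ u ∈ (f : Sym2 V))
      (hv : ¬∃ e f : G.edgeSet, e ≠ f ∧ v ∈ (e : Sym2 V) ∧ v ∈ (f : Sym2 V)),
      ((ψ ⟨s(u, v), G.mem_edgeSet.2 h⟩ : H.edgeSet) : Sym2 W) = s(φf u, φf v) := by
    intro u v h hu hv
    have hw : vv v hv = u := huniq_nb v hv (hadj1 v hv) h.symm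
    have hs := hspec1 v hv
    rw [hw] at hs
    obtain ⟨heq, _⟩ := hs hu h.symm
    have hsub : (⟨s(v, u), G.mem_edgeSet.2 h.symm⟩ : G.edgeSet) =
        ⟨s(u, v), G.mem_edgeSet.2 h⟩ := Subtype.ext Sym2.eq_swap
    rw [hsub] at heq
    rw [heq, hφf_pos u hu, hφf_neg v hv]
  have hmain : ∀ (u v : V) (h : G.Adj u v),
      ((ψ ⟨s(u, v), G.mem_edgeSet.2 h⟩ : H.edgeSet) : Sym2 W) = s(φf u, φf v) := by
    intro u v h
    by_cases hu : ∃ e f : G.edgeSet, e ≠ f ∧ u ∈ (e : Sym2 V) ∧ u ∈ (f : Sym2 V) <;>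
      by_cases hv : ∃ e f : G.edgeSet, e ≠ f ∧ v ∈ (e : Sym2 V) ∧ v ∈ (f : Sym2 V)
    · rw [hφf_pos u hu, hφf_pos v hv]
      exact (Sym2.mem_and_mem_iff (hF2 u v hu hv h)).1
        ⟨hcenter u hu _ (Sym2.mem_mk_left _ _), hcenter v hv _ (Sym2.mem_mk_right _ _)⟩
    · exact hmix u v h hu hv
    · have hsub : (⟨s(u, v), G.mem_edgeSet.2 h⟩ : G.edgeSet) =
          ⟨s(v, u), G.mem_edgeSet.2 h.symm⟩ := Subtype.ext Sym2.eq_swap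
      rw [hsub, hmix v u h.symm hv hu]
      exact Sym2.eq_swap
    · exfalso
      have hk := hv1 u hu
      rw [huniq_nb u hu (hadj1 u hu) h] at hk
      exact hv hk
  -- injectivity
  have hinj : Function.Injective φf := by
    intro a b hab
    by_contra hne
    by_cases hadj : G.Adj a b
    · have hm := hmain a b hadj
      have hd := H.not_isDiag_of_mem_edgeSet (ψ ⟨s(a, b), G.mem_edgeSet.2 hadj⟩).2
      rw [hm] at hd
      apply hd
      rw [← hab]
      exact Sym2.mk_isDiag_iff.2 rfl
    · obtain ⟨e, hae⟩ := hEdge a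
      obtain ⟨f, hbf⟩ := hEdge b
      obtain ⟨a', he_eq, hadj_a⟩ := edge_rep e hae
      obtain ⟨b', hf_eq, hadj_b⟩ := edge_rep f hbf
      have hE : ((ψ e : H.edgeSet) : Sym2 W) = s(φf a, φf a') := by
        rw [show e = ⟨s(a, a'), G.mem_edgeSet.2 hadj_a⟩ from Subtype.ext he_eq]
        exact hmain a a' hadj_a
      have hF : ((ψ f : H.edgeSet) : Sym2 W) = s(φf b, φf b') := by
        rw [show f = ⟨s(b, b'), G.mem_edgeSet.2 hadj_b⟩ from Subtype.ext hf_eq]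
        exact hmain b b' hadj_b
      have hef : e ≠ f := by
        intro hc
        have haf : a ∈ (f : Sym2 V) := hc ▸ hae
        rw [hf_eq, Sym2.mem_iff] at haf
        rcases haf with h1 | h1
        · exact hne h1
        · exact hadj (h1 ▸ hadj_b).symm
      obtain ⟨w, hwe, hwf⟩ := (shares_map ψ hef).2
        ⟨φf a, by rw [hE]; exact Sym2.mem_mk_left _ _,
          by rw [hF, ← hab]; exact Sym2.mem_mk_left _ _⟩
      rw [he_eq, Sym2.mem_iff] at hwe
      rw [hf_eq, Sym2.mem_iff] at hwf
      rcases hwe with rfl | rfl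
      · rcases hwf with h1 | h1
        · exact hne h1
        · exact hadj (h1 ▸ hadj_b).symm
      · rcases hwf with h1 | h1
        · exact hadj (h1 ▸ hadj_a)
        · refine hef (ψ.injective (Subtype.ext ?_))
          rw [hE, hF, hab, h1]
  -- surjectivity
  have hEdgeH : ∀ w : W, ∃ f : H.edgeSet, w ∈ (f : Sym2 W) := by
    intro w
    have hVne : Nonempty V := Fintype.card_pos_iff.1 (by omega)
    obtain ⟨e0, _⟩ := hEdge (Classical.arbitrary V)
    have hp : ((ψ e0 : H.edgeSet) : Sym2 W).out.1 ∈ ((ψ e0 : H.edgeSet) : Sym2 W) :=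
      Sym2.out_fst_mem _
    by_cases hwp : w = ((ψ e0 : H.edgeSet) : Sym2 W).out.1
    · exact ⟨ψ e0, hwp ▸ hp⟩
    obtain ⟨wk⟩ := hH.preconnected w (((ψ e0 : H.edgeSet) : Sym2 W).out.1)
    cases wk with
    | nil => exact absurd rfl hwp
    | cons h p => exact ⟨⟨s(w, _), H.mem_edgeSet.2 h⟩, Sym2.mem_mk_left _ _⟩
  have hsurj : Function.Surjective φf := by
    intro w
    obtain ⟨f, hwf⟩ := hEdgeH w
    obtain ⟨p, hpe⟩ : ∃ p, p ∈ ((ψ.symm f : G.edgeSet) : Sym2 V) :=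
      ⟨_, Sym2.out_fst_mem _⟩
    obtain ⟨q, he_eq, hpq⟩ := edge_rep (ψ.symm f) hpe
    have hm := hmain p q hpq
    rw [show (⟨s(p, q), G.mem_edgeSet.2 hpq⟩ : G.edgeSet) = ψ.symm f from
      Subtype.ext he_eq.symm, ψ.apply_symm_apply] at hm
    have hw : w ∈ s(φf p, φf q) := hm ▸ hwf
    rw [Sym2.mem_iff] at hw
    rcases hw with h1 | h1
    · exact ⟨p, h1.symm⟩
    · exact ⟨q, h1.symm⟩
  -- the isomorphism
  have hrel : ∀ a b : V, H.Adj (φf a) (φf b) ↔ G.Adj a b := by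
    intro a b
    constructor
    · intro hH'
      have hmem : s(φf a, φf b) ∈ H.edgeSet := H.mem_edgeSet.2 hH'
      obtain ⟨pp, hpe⟩ : ∃ p, p ∈ ((ψ.symm ⟨s(φf a, φf b), hmem⟩ : G.edgeSet) : Sym2 V) :=
        ⟨_, Sym2.out_fst_mem _⟩
      obtain ⟨q, he_eq, hpq⟩ := edge_rep (ψ.symm ⟨s(φf a, φf b), hmem⟩) hpe
      have hm := hmain pp q hpq
      have hsub : (⟨s(pp, q), G.mem_edgeSet.2 hpq⟩ : G.edgeSet) =
          ψ.symm ⟨s(φf a, φf b), hmem⟩ := Subtype.ext he_eq.symm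
      rw [hsub, ψ.apply_symm_apply] at hm
      have hm2 : s(φf a, φf b) = s(φf pp, φf q) := hm
      rw [Sym2.eq_iff] at hm2
      rcases hm2 with ⟨h1, h2⟩ | ⟨h1, h2⟩
      · obtain rfl : a = pp := hinj h1
        obtain rfl : b = q := hinj h2
        exact hpq
      · obtain rfl : a = q := hinj h1
        obtain rfl : b = pp := hinj h2
        exact hpq.symm
    · intro hG'
      have hm := hmain a b hG'
      have hmem := (ψ ⟨s(a, b), G.mem_edgeSet.2 hG'⟩ : H.edgeSet).2
      rw [hm] at hmem
      exact H.mem_edgeSet.1 hmem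
  have hbij : Function.Bijective φf := ⟨hinj, hsurj⟩
  have hcoe : ∀ x : V,
      (⟨Equiv.ofBijective φf hbij, @fun a b => hrel a b⟩ : G ≃g H) x = φf x := by
    intro x
    rfl
  refine ⟨⟨Equiv.ofBijective φf hbij, @fun a b => hrel a b⟩, ?_, ?_⟩
  · intro u v h
    rw [hcoe, hcoe]
    exact hmain u v h
  · intro φ' hφ'
    have hQ' : ∀ (u v : V) (h : G.Adj u v),
        φ' u ∈ ((ψ ⟨s(u, v), G.mem_edgeSet.2 h⟩ : H.edgeSet) : Sym2 W) := by
      intro u v h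
      rw [hφ' u v h]
      exact Sym2.mem_mk_left _ _
    have hpoint2 : ∀ u (hu : ∃ e f : G.edgeSet, e ≠ f ∧ u ∈ (e : Sym2 V) ∧ u ∈ (f : Sym2 V)),
        φ' u = φf u := by
      intro u hu
      obtain ⟨e, f, hef, hue, huf⟩ := hu
      obtain ⟨a, he_eq, hadj_a⟩ := edge_rep e hue
      obtain ⟨b, hf_eq, hadj_b⟩ := edge_rep f huf
      have h1 : φ' u ∈ ((ψ e : H.edgeSet) : Sym2 W) := by
        rw [show e = ⟨s(u, a), G.mem_edgeSet.2 hadj_a⟩ from Subtype.ext he_eq]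
        exact hQ' u a hadj_a
      have h2 : φ' u ∈ ((ψ f : H.edgeSet) : Sym2 W) := by
        rw [show f = ⟨s(u, b), G.mem_edgeSet.2 hadj_b⟩ from Subtype.ext hf_eq]
        exact hQ' u b hadj_b
      have hu' : ∃ e f : G.edgeSet, e ≠ f ∧ u ∈ (e : Sym2 V) ∧ u ∈ (f : Sym2 V) :=
        ⟨e, f, hef, hue, huf⟩
      have h3 : φf u ∈ ((ψ e : H.edgeSet) : Sym2 W) := by
        rw [hφf_pos u hu']
        exact hcenter u hu' e hue
      have h4 : φf u ∈ ((ψ f : H.edgeSet) : Sym2 W) := by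
        rw [hφf_pos u hu']
        exact hcenter u hu' f huf
      exact shared_unique (hψne hef) h1 h2 h3 h4
    have hpoint : ∀ u, φ' u = φf u := by
      intro u
      by_cases hu : ∃ e f : G.edgeSet, e ≠ f ∧ u ∈ (e : Sym2 V) ∧ u ∈ (f : Sym2 V)
      · exact hpoint2 u hu
      · have hadj := hadj1 u hu
        have hk := hv1 u hu
        have hvk : φ' (vv u hu) = φf (vv u hu) := hpoint2 _ hk
        have heq' := hφ' u (vv u hu) hadj
        have heqm := hmain u (vv u hu) hadj
        have hnd := H.not_isDiag_of_mem_edgeSet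
          (ψ ⟨s(u, vv u hu), G.mem_edgeSet.2 hadj⟩ : H.edgeSet).2
        rw [heq'] at hnd
        have hcmp : s(φ' u, φ' (vv u hu)) = s(φf u, φf (vv u hu)) := by
          rw [← heq', ← heqm]
        rw [hvk] at hcmp
        rw [Sym2.eq_iff] at hcmp
        rcases hcmp with ⟨h1, _⟩ | ⟨h1, h2⟩
        · exact h1
        · exfalso
          apply hnd
          have hdd : φ' u = φ' (vv u hu) := by rw [h1, ← hvk]
          rw [hdd]
          exact Sym2.mk_isDiag_iff.2 rfl
    exact RelIso.ext fun u => (hpoint u).trans (hcoe u).symm
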